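/- arXiv:2111.15653 — 2 statements merged into one kernel-verified Lean document; each statement's English description precedes it below -/
import Mathlib

section
/- Let R = k[x_1,...,x_d] with k a field of characteristic 0. If I ⊆ R is a monomial ideal and n a positive integer, then the n-th differential power I^⟨n⟩ is also a monomial ideal; that is, whenever a polynomial f = Σ c_i x^{α_i} (with distinct exponent tuples α_i and nonzero coefficients c_i) lies in I^⟨n⟩, each monomial x^{α_i} lies in I^⟨n⟩. -/
/-- `IsDiffOp A n φ` says that the `A`-linear endomorphism `φ` of `R` is an
`A`-linear differential operator of order at most `n`. -/
def IsDiffOp (A : Type*) {R : Type*} [CommRing A] [CommRing R] [Algebra A R] :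
    ℕ → (R →ₗ[A] R) → Prop
  | 0 => fun φ => ∃ r : R, φ = LinearMap.mulLeft A r
  | n + 1 => fun φ => ∀ a : R,
      IsDiffOp A n (φ ∘ₗ LinearMap.mulLeft A a - LinearMap.mulLeft A a ∘ₗ φ)

theorem isDiffOp_comp_mulLeft (A : Type*) {R : Type*} [CommRing A] [CommRing R]
    [Algebra A R] (x : R) (n : ℕ) :
    ∀ φ : R →ₗ[A] R, IsDiffOp A n φ → IsDiffOp A n (φ ∘ₗ LinearMap.mulLeft A x) := by
  induction n with
  | zero =>
    rintro φ ⟨r, rfl⟩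
    exact ⟨r * x, by ext y; simp [mul_assoc]⟩
  | succ n ih =>
    intro φ h a
    have h2 := ih _ (h a)
    have key : (φ ∘ₗ LinearMap.mulLeft A x) ∘ₗ LinearMap.mulLeft A a -
        LinearMap.mulLeft A a ∘ₗ (φ ∘ₗ LinearMap.mulLeft A x) =
        (φ ∘ₗ LinearMap.mulLeft A a - LinearMap.mulLeft A a ∘ₗ φ) ∘ₗ LinearMap.mulLeft A x := by
      ext y
      simp [mul_left_comm]
    rw [key]
    exact h2

/-- The `n`-th differential power of an ideal `I` of the `A`-algebra `R`:
the set of `r ∈ R` such that `∂ r ∈ I` for every `A`-linear differential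
operator `∂` of order at most `n - 1`. -/
def diffPow (A : Type*) {R : Type*} [CommRing A] [CommRing R] [Algebra A R]
    (n : ℕ) (I : Ideal R) : Ideal R where
  carrier := {r | ∀ φ : R →ₗ[A] R, IsDiffOp A (n - 1) φ → φ r ∈ I}
  add_mem' := fun hx hy φ hφ => by simp [map_add]; exact I.add_mem (hx φ hφ) (hy φ hφ)
  zero_mem' := fun φ _ => by simpa using I.zero_mem
  smul_mem' := fun c x hx => by
    intro φ hφ
    have := hx (φ ∘ₗ LinearMap.mulLeft A c) (isDiffOp_comp_mulLeft A c _ φ hφ)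
    simpa [smul_eq_mul] using this

/-- An ideal of a polynomial ring is a monomial ideal if it is generated by monomials. -/
def IsMonomialIdeal {k : Type*} [Field k] {d : ℕ}
    (I : Ideal (MvPolynomial (Fin d) k)) : Prop :=
  ∃ S : Set (Fin d →₀ ℕ),
    I = Ideal.span ((fun s => (MvPolynomial.monomial s (1 : k))) '' S)


open MvPolynomial

section DiffOpLemmas

variable (A : Type*) {R : Type*} [CommRing A] [CommRing R] [Algebra A R]

theorem isDiffOp_add (n : ℕ) :
    ∀ φ ψ : R →ₗ[A] R, IsDiffOp A n φ → IsDiffOp A n ψ → IsDiffOp A n (φ + ψ) := by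
  induction n with
  | zero =>
    rintro φ ψ ⟨r, rfl⟩ ⟨r', rfl⟩
    exact ⟨r + r', by ext y; simp [add_mul]⟩
  | succ n ih =>
    intro φ ψ hφ hψ a
    have key : (φ + ψ) ∘ₗ LinearMap.mulLeft A a - LinearMap.mulLeft A a ∘ₗ (φ + ψ) =
        (φ ∘ₗ LinearMap.mulLeft A a - LinearMap.mulLeft A a ∘ₗ φ) +
        (ψ ∘ₗ LinearMap.mulLeft A a - LinearMap.mulLeft A a ∘ₗ ψ) := by
      ext y; simp; ring
    rw [key]
    exact ih _ _ (hφ a) (hψ a)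

theorem commutator_jacobi (x y z : Module.End A R) :
    (x * y - y * x) * z - z * (x * y - y * x) =
      ((x * z - z * x) * y - y * (x * z - z * x)) + (x * (y * z - z * y) - (y * z - z * y) * x) := by
  simp only [mul_sub, sub_mul, mul_assoc]
  abel

/-- Commuting with a derivation-like operator preserves the order of a
differential operator. -/
theorem isDiffOp_commutator_derivation (D : R →ₗ[A] R)
    (hD : ∀ a b : R, D (a * b) = a * D b + D a * b) (n : ℕ) :
    ∀ φ : R →ₗ[A] R, IsDiffOp A n φ → IsDiffOp A n (φ ∘ₗ D - D ∘ₗ φ) := by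
  induction n with
  | zero =>
    rintro φ ⟨r, rfl⟩
    refine ⟨-D r, ?_⟩
    ext y
    simp [hD r y]
  | succ n ih =>
    intro φ hφ a
    have hDa : D ∘ₗ LinearMap.mulLeft A a - LinearMap.mulLeft A a ∘ₗ D =
        LinearMap.mulLeft A (D a) := by
      ext y
      simp [hD a y]
    have key : (φ ∘ₗ D - D ∘ₗ φ) ∘ₗ LinearMap.mulLeft A a -
        LinearMap.mulLeft A a ∘ₗ (φ ∘ₗ D - D ∘ₗ φ) =
        ((φ ∘ₗ LinearMap.mulLeft A a - LinearMap.mulLeft A a ∘ₗ φ) ∘ₗ D -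
          D ∘ₗ (φ ∘ₗ LinearMap.mulLeft A a - LinearMap.mulLeft A a ∘ₗ φ)) +
        (φ ∘ₗ LinearMap.mulLeft A (D a) - LinearMap.mulLeft A (D a) ∘ₗ φ) := by
      have := commutator_jacobi A φ D (LinearMap.mulLeft A a)
      simp only [Module.End.mul_eq_comp] at this
      rw [this]
      congr 1
      rw [← hDa]
    rw [key]
    exact isDiffOp_add A n _ _ (ih _ (hφ a)) (hφ (D a))

theorem mem_diffPow {n : ℕ} {I : Ideal R} {f : R} :
    f ∈ diffPow A n I ↔ ∀ φ : R →ₗ[A] R, IsDiffOp A (n - 1) φ → φ f ∈ I := Iff.rfl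

end DiffOpLemmas

section Theta

variable {k : Type*} [Field k] {d : ℕ}

/-- The theta operator `θᵢ = xᵢ ∂ᵢ`. -/
noncomputable def thetaOp (i : Fin d) :
    MvPolynomial (Fin d) k →ₗ[k] MvPolynomial (Fin d) k :=
  LinearMap.mulLeft k (X i) ∘ₗ (pderiv i).toLinearMap

theorem thetaOp_apply (i : Fin d) (f : MvPolynomial (Fin d) k) :
    thetaOp i f = X i * pderiv i f := rfl

theorem thetaOp_leibniz (i : Fin d) (a b : MvPolynomial (Fin d) k) :
    thetaOp i (a * b) = a * thetaOp i b + thetaOp i a * b := by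
  simp only [thetaOp_apply, Derivation.leibniz, smul_eq_mul]
  ring

theorem thetaOp_monomial (i : Fin d) (s : Fin d →₀ ℕ) (a : k) :
    thetaOp i (monomial s a) = monomial s ((s i : k) * a) := by
  rw [thetaOp_apply, pderiv_monomial]
  rcases Nat.eq_zero_or_pos (s i) with h | h
  · simp [h]
  · rw [X, monomial_mul, one_mul]
    have hle : Finsupp.single i 1 ≤ s := Finsupp.single_le_iff.mpr h
    rw [add_tsub_cancel_of_le hle, mul_comm]

theorem coeff_thetaOp (i : Fin d) (f : MvPolynomial (Fin d) k) (u : Fin d →₀ ℕ) :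
    coeff u (thetaOp i f) = (u i : k) * coeff u f := by
  conv_lhs => rw [f.as_sum, map_sum]
  rw [Finset.sum_congr rfl (fun v _ => by rw [thetaOp_monomial]), coeff_sum]
  simp only [coeff_monomial]
  rcases Finset.decidableMem u f.support with hu | hu
  · rw [Finset.sum_eq_zero, MvPolynomial.notMem_support_iff.mp hu, mul_zero]
    intro v hv
    rw [if_neg]
    intro h; exact hu (h ▸ hv)
  · rw [Finset.sum_eq_single u]
    · rw [if_pos rfl]
    · intro v _ hvu; rw [if_neg hvu]
    · intro h; exact absurd hu h

theorem thetaOp_mem_of_monomialIdeal {I : Ideal (MvPolynomial (Fin d) k)}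
    (hI : IsMonomialIdeal I) (i : Fin d) {g : MvPolynomial (Fin d) k} (hg : g ∈ I) :
    thetaOp i g ∈ I := by
  obtain ⟨S, rfl⟩ := hI
  refine Submodule.span_induction
    (p := fun x _ => thetaOp i x ∈ Ideal.span ((fun s => (monomial s (1 : k))) '' S))
    ?_ ?_ ?_ ?_ hg
  · rintro x ⟨s, hs, rfl⟩
    rw [thetaOp_monomial, ← C_mul_monomial]
    have hm : (monomial s (1 : k)) ∈
        Ideal.span ((fun s => (monomial s (1 : k))) '' S) :=
      Ideal.subset_span (Set.mem_image_of_mem _ hs)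
    exact Ideal.mul_mem_left _ _ hm
  · simp
  · intro x y _ _ hx hy
    rw [map_add]; exact Ideal.add_mem _ hx hy
  · intro a x hxmem hx
    rw [smul_eq_mul, thetaOp_leibniz]
    exact Ideal.add_mem _ (Ideal.mul_mem_left _ _ hx)
      (Ideal.mul_mem_left _ (thetaOp i a) hxmem)

theorem thetaOp_mem_diffPow {I : Ideal (MvPolynomial (Fin d) k)}
    (hI : IsMonomialIdeal I) (i : Fin d) (n : ℕ) {f : MvPolynomial (Fin d) k}
    (hf : f ∈ diffPow k n I) : thetaOp i f ∈ diffPow k n I := by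
  intro φ hφ
  have h1 : (φ ∘ₗ thetaOp i - thetaOp i ∘ₗ φ) f ∈ I :=
    hf _ (isDiffOp_commutator_derivation k (thetaOp i) (thetaOp_leibniz i) _ φ hφ)
  have h2 : thetaOp i (φ f) ∈ I := thetaOp_mem_of_monomialIdeal hI i (hf φ hφ)
  have : φ (thetaOp i f) = (φ ∘ₗ thetaOp i - thetaOp i ∘ₗ φ) f + thetaOp i (φ f) := by
    simp
  rw [this]
  exact Ideal.add_mem _ h1 h2

end Theta

theorem monomial_mem_diffPow_aux {k : Type*} [Field k] [CharZero k] {d : ℕ}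
    {I : Ideal (MvPolynomial (Fin d) k)} (hI : IsMonomialIdeal I) (n : ℕ) :
    ∀ N : ℕ, ∀ f : MvPolynomial (Fin d) k, f.support.card ≤ N →
      f ∈ diffPow k n I → ∀ s ∈ f.support, (monomial s (1 : k)) ∈ diffPow k n I := by
  intro N
  induction N with
  | zero =>
    intro f hcard _ s hs
    rw [Nat.le_zero, Finset.card_eq_zero] at hcard
    rw [hcard] at hs
    exact absurd hs (Finset.notMem_empty s)
  | succ N ih =>
    intro f hcard hf s hs
    by_cases hsupp : ∀ t ∈ f.support, t = s
    · -- f is a single monomial supported at s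
      have hcs : coeff s f ≠ 0 := MvPolynomial.mem_support_iff.mp hs
      have hsup : f.support = {s} := by
        apply Finset.eq_singleton_iff_unique_mem.mpr
        exact ⟨hs, hsupp⟩
      have hfe : f = monomial s (coeff s f) := by
        conv_lhs => rw [f.as_sum]
        rw [hsup, Finset.sum_singleton]
      have : monomial s (1 : k) = C (coeff s f)⁻¹ * f := by
        rw [hfe, C_mul_monomial, coeff_monomial, if_pos rfl, inv_mul_cancel₀ hcs]
      rw [this]
      exact Ideal.mul_mem_left _ _ hf
    · push_neg at hsupp
      obtain ⟨t, ht, hts⟩ := hsupp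
      obtain ⟨i, hi⟩ := Finsupp.ne_iff.mp hts
      set g : MvPolynomial (Fin d) k := thetaOp i f - C ((t i : k)) * f with hg
      have hgmem : g ∈ diffPow k n I :=
        Ideal.sub_mem _ (thetaOp_mem_diffPow hI i n hf) (Ideal.mul_mem_left _ _ hf)
      have hcoeff : ∀ u : Fin d →₀ ℕ,
          coeff u g = ((u i : k) - (t i : k)) * coeff u f := by
        intro u
        rw [hg, coeff_sub, coeff_thetaOp, coeff_C_mul]
        ring
      have hsubset : g.support ⊆ f.support.erase t := by
        intro u hu
        have hcu : coeff u g ≠ 0 := MvPolynomial.mem_support_iff.mp hu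
        rw [hcoeff u] at hcu
        refine Finset.mem_erase.mpr ⟨?_, ?_⟩
        · rintro rfl
          simp at hcu
        · exact MvPolynomial.mem_support_iff.mpr fun h => hcu (by rw [h, mul_zero])
      have hcard' : g.support.card ≤ N := by
        calc g.support.card ≤ (f.support.erase t).card := Finset.card_le_card hsubset
          _ = f.support.card - 1 := Finset.card_erase_of_mem ht
          _ ≤ N := by omega
      have hsg : s ∈ g.support := by
        rw [MvPolynomial.mem_support_iff, hcoeff s]
        exact mul_ne_zero (sub_ne_zero.mpr fun h => hi (Nat.cast_injective h).symm)
          (MvPolynomial.mem_support_iff.mp hs)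
      exact ih g hcard' hgmem s hsg

/-- Differential powers of monomial ideals are monomial ideals: moreover every
monomial appearing in an element of `I^⟨n⟩` again lies in `I^⟨n⟩`. -/
theorem diffPow_isMonomialIdeal {k : Type*} [Field k] [CharZero k] {d : ℕ}
    (I : Ideal (MvPolynomial (Fin d) k)) (hI : IsMonomialIdeal I)
    (n : ℕ) (hn : 0 < n) :
    IsMonomialIdeal (diffPow k n I) ∧
      ∀ f ∈ diffPow k n I, ∀ s ∈ f.support,
        (MvPolynomial.monomial s (1 : k)) ∈ diffPow k n I := by
  have part2 : ∀ f ∈ diffPow k n I, ∀ s ∈ f.support,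
      (MvPolynomial.monomial s (1 : k)) ∈ diffPow k n I :=
    fun f hf s hs => monomial_mem_diffPow_aux hI n f.support.card f le_rfl hf s hs
  refine ⟨⟨{s | (monomial s (1 : k)) ∈ diffPow k n I}, ?_⟩, part2⟩
  apply le_antisymm
  · intro f hf
    rw [f.as_sum]
    refine Submodule.sum_mem _ fun v hv => ?_
    rw [← mul_one (MvPolynomial.coeff v f), ← C_mul_monomial]
    refine Ideal.mul_mem_left _ _ (Ideal.subset_span ?_)
    exact Set.mem_image_of_mem _ (part2 f hf v hv)
  · rw [Ideal.span_le]
    rintro x ⟨s, hs, rfl⟩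
    exact hs
end

section
/- Let R be a commutative A-algebra domain and suppose the ideal I ⊆ R satisfies I^⟨m⟩_A · I^⟨n⟩_A ⊆ I^⟨m+n⟩_A for all m, n (e.g. R a polynomial ring over a field A of characteristic 0). Then the differential closure I^diff_A is an ideal of R: it contains I, is closed under multiplication by elements of R, and is closed under addition. -/
/-- The differential closure of an ideal `I` with respect to `A`: elements `r`
such that `c * r ^ n ∈ I^⟨n⟩_A` for some fixed nonzero `c` and all `n ≫ 0`. -/
def diffClosure (A : Type*) {R : Type*} [CommRing A] [CommRing R] [Algebra A R]
    (I : Ideal R) : Set R :=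
  {r | ∃ c : R, c ≠ 0 ∧ ∃ N : ℕ, ∀ n : ℕ, N ≤ n → c * r ^ n ∈ diffPow A n I}

theorem isDiffOp_succ_of (A : Type*) {R : Type*} [CommRing A] [CommRing R]
    [Algebra A R] (n : ℕ) :
    ∀ φ : R →ₗ[A] R, IsDiffOp A n φ → IsDiffOp A (n + 1) φ := by
  induction n with
  | zero =>
    rintro φ ⟨r, rfl⟩ a
    refine ⟨0, ?_⟩
    ext y
    simp [mul_left_comm]
  | succ n ih =>
    intro φ h a
    exact ih _ (h a)

theorem isDiffOp_of_le (A : Type*) {R : Type*} [CommRing A] [CommRing R]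
    [Algebra A R] {m n : ℕ} (h : m ≤ n) (φ : R →ₗ[A] R) (hφ : IsDiffOp A m φ) :
    IsDiffOp A n φ := by
  induction n, h using Nat.le_induction with
  | base => exact hφ
  | succ n hmn ih => exact isDiffOp_succ_of A n φ ih

theorem diffPow_antitone {A R : Type*} [CommRing A] [CommRing R] [Algebra A R]
    (I : Ideal R) {m n : ℕ} (h : m ≤ n) : diffPow A n I ≤ diffPow A m I := by
  intro r hr φ hφ
  exact hr φ (isDiffOp_of_le A (Nat.sub_le_sub_right h 1) φ hφ)

theorem mem_diffPow_one {A R : Type*} [CommRing A] [CommRing R] [Algebra A R]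
    {I : Ideal R} {r : R} (hr : r ∈ I) : r ∈ diffPow A 1 I := by
  rintro φ ⟨s, rfl⟩
  simpa using I.mul_mem_left s hr

theorem pow_mem_diffPow {A R : Type*} [CommRing A] [CommRing R] [Algebra A R]
    {I : Ideal R}
    (hmul : ∀ m n : ℕ, diffPow A m I * diffPow A n I ≤ diffPow A (m + n) I)
    {r : R} (hr : r ∈ I) : ∀ n : ℕ, 1 ≤ n → r ^ n ∈ diffPow A n I := by
  intro n hn
  induction n with
  | zero => omega
  | succ n ih =>
    rcases Nat.eq_or_lt_of_le hn with h | h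
    · simpa [← h] using mem_diffPow_one (A := A) hr
    · have hn1 : 1 ≤ n := by omega
      have := hmul 1 n (Ideal.mul_mem_mul (mem_diffPow_one (A := A) hr) (ih hn1))
      simpa [pow_succ, mul_comm, Nat.add_comm] using this

/-- If `I^⟨m⟩ ⋅ I^⟨n⟩ ⊆ I^⟨m+n⟩` for all `m, n`, then the differential closure of
`I` is an ideal: it contains `I`, and is closed under multiplication by ring
elements and under addition. -/
theorem diffClosure_isIdeal {A R : Type*} [CommRing A] [CommRing R] [IsDomain R]
    [Algebra A R] (I : Ideal R)
    (hmul : ∀ m n : ℕ, diffPow A m I * diffPow A n I ≤ diffPow A (m + n) I) :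
    (I : Set R) ⊆ diffClosure A I ∧
      (∀ r x : R, x ∈ diffClosure A I → r * x ∈ diffClosure A I) ∧
      ∀ a b : R, a ∈ diffClosure A I → b ∈ diffClosure A I →
        a + b ∈ diffClosure A I := by
  refine ⟨?_, ?_, ?_⟩
  · intro r hr
    exact ⟨1, one_ne_zero, 1, fun n hn => by
      simpa using pow_mem_diffPow hmul hr n hn⟩
  · rintro r x ⟨c, hc, N, hN⟩
    refine ⟨c, hc, N, fun n hn => ?_⟩
    have := (diffPow A n I).mul_mem_left (r ^ n) (hN n hn)
    have heq : r ^ n * (c * x ^ n) = c * (r * x) ^ n := by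
      rw [mul_pow]; ring
    rwa [heq] at this
  · rintro a b ⟨ca, hca, Na, hNa⟩ ⟨cb, hcb, Nb, hNb⟩
    rcases eq_or_ne a 0 with rfl | ha
    · exact ⟨cb, hcb, Nb, fun n hn => by simpa using hNb n hn⟩
    rcases eq_or_ne b 0 with rfl | hb
    · exact ⟨ca, hca, Na, fun n hn => by simpa using hNa n hn⟩
    set N := max Na Nb with hNdef
    refine ⟨ca * cb * a ^ N * b ^ N,
      mul_ne_zero (mul_ne_zero (mul_ne_zero hca hcb) (pow_ne_zero _ ha)) (pow_ne_zero _ hb), 0, fun n _ => ?_⟩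
    rw [add_pow, Finset.mul_sum]
    refine Ideal.sum_mem _ fun k hk => ?_
    have hka : Na ≤ N + k := le_trans (le_max_left _ _) (Nat.le_add_right _ _)
    have hkb : Nb ≤ N + (n - k) := le_trans (le_max_right _ _) (Nat.le_add_right _ _)
    have hmem : (ca * a ^ (N + k)) * (cb * b ^ (N + (n - k))) ∈
        diffPow A (N + k + (N + (n - k))) I :=
      hmul _ _ (Ideal.mul_mem_mul (hNa _ hka) (hNb _ hkb))
    have hle : n ≤ N + k + (N + (n - k)) := by
      simp only [Finset.mem_range] at hk; omega
    have hmem' := diffPow_antitone I hle hmem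
    have heq : ca * cb * a ^ N * b ^ N * (a ^ k * b ^ (n - k) * (n.choose k : R)) =
        (n.choose k : R) * ((ca * a ^ (N + k)) * (cb * b ^ (N + (n - k)))) := by
      rw [pow_add, pow_add]; ring
    rw [heq]
    exact (diffPow A n I).mul_mem_left _ hmem'
end
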